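/- Let ν > 2, 0 < p < 2, and z ≥ 0, w ≥ 0 with z + w > 0 be real numbers. Then the infinite product ∏_{j=1}^{∞} (z + w·4^j)^{(ν/4)·(1−p/2)^{j−1}} converges (the partial products have a limit in (0,∞)), and its value is at most (z+w)^{ν/(2p)} · 2^{2ν/p²}. -/
import Mathlib


open Filter

lemma moser_aux_summable (r C D : ℝ) (hr0 : 0 ≤ r) (hr1 : r < 1) :
    Summable (fun i : ℕ => (C + (i + 1) * D) * r ^ i) := by
  have h1 : Summable (fun i : ℕ => C * r ^ i) :=
    (summable_geometric_of_lt_one hr0 hr1).mul_left C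
  have h2 : Summable (fun i : ℕ => ((i : ℝ) * r ^ i) * D) := by
    have : ‖r‖ < 1 := by rwa [Real.norm_eq_abs, abs_of_nonneg hr0]
    exact (summable_norm_pow_mul_geometric_of_norm_lt_one 1 this).of_norm.mul_right D
      |>.congr (by intro i; push_cast; ring)
  have h3 : Summable (fun i : ℕ => D * r ^ i) :=
    (summable_geometric_of_lt_one hr0 hr1).mul_left D
  exact ((h1.add h2).add h3).congr (fun i => by push_cast; ring)

/-- Moser-iteration product estimate (3.31) for small exponents: for `ν > 2`, `0 < p < 2`,
`z, w ≥ 0` with `z + w > 0`, the infinite product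
`∏_{j=1}^∞ (z + w·4^j)^((ν/4)·(1−p/2)^(j−1))` converges to a positive limit bounded by
`(z+w)^(ν/(2p)) · 2^(2ν/p²)`. -/
theorem moser_product_estimate_small_p (ν p z w : ℝ) (hν : 2 < ν) (hp0 : 0 < p) (hp2 : p < 2)
    (hz : 0 ≤ z) (hw : 0 ≤ w) (hzw : 0 < z + w) :
    ∃ L : ℝ, 0 < L ∧
      Tendsto (fun k : ℕ =>
          ∏ j ∈ Finset.Icc 1 k, (z + w * 4 ^ j) ^ ((ν / 4) * (1 - p / 2) ^ (j - 1)))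
        atTop (nhds L) ∧
      L ≤ (z + w) ^ (ν / (2 * p)) * (2 : ℝ) ^ (2 * ν / p ^ 2) := by
  set r : ℝ := 1 - p / 2 with hrdef
  have hr0 : 0 ≤ r := by simp only [hrdef]; linarith
  have hr1 : r < 1 := by simp only [hrdef]; linarith
  have hrn : ‖r‖ < 1 := by rwa [Real.norm_eq_abs, abs_of_nonneg hr0]
  have h1r : 1 - r = p / 2 := by simp [hrdef]
  have hpow1 : ∀ j : ℕ, (1 : ℝ) ≤ 4 ^ j := fun j => one_le_pow₀ (by norm_num)
  have hbase : ∀ j : ℕ, 0 < z + w * 4 ^ j := by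
    intro j
    have := hpow1 j
    nlinarith
  have hble : ∀ j : ℕ, z + w * 4 ^ j ≤ (z + w) * 4 ^ j := by
    intro j
    have := hpow1 j
    nlinarith
  have hbge : ∀ j : ℕ, z + w ≤ z + w * 4 ^ j := by
    intro j
    have := hpow1 j
    nlinarith
  set g : ℕ → ℝ := fun i => Real.log (z + w * 4 ^ (i + 1)) * (ν / 4 * r ^ i) with hg
  -- summability
  have hlogbound : ∀ i : ℕ,
      |Real.log (z + w * 4 ^ (i + 1))| ≤ |Real.log (z + w)| + (i + 1) * Real.log 4 := by
    intro i
    have hlog4 : 0 < Real.log 4 := Real.log_pos (by norm_num)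
    have hub : Real.log (z + w * 4 ^ (i + 1)) ≤ Real.log (z + w) + (i + 1) * Real.log 4 := by
      calc Real.log (z + w * 4 ^ (i + 1)) ≤ Real.log ((z + w) * 4 ^ (i + 1)) :=
            Real.log_le_log (hbase _) (hble _)
        _ = Real.log (z + w) + (i + 1) * Real.log 4 := by
            rw [Real.log_mul (ne_of_gt hzw) (by positivity), Real.log_pow]
            push_cast; ring
    have hlb : Real.log (z + w) ≤ Real.log (z + w * 4 ^ (i + 1)) :=
      Real.log_le_log hzw (hbge _)
    rw [abs_le]
    constructor
    · have := neg_abs_le (Real.log (z + w))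
      nlinarith
    · have := le_abs_self (Real.log (z + w))
      nlinarith
  have hsum : Summable g := by
    apply Summable.of_norm
    have hnorm : Summable (fun i : ℕ =>
        ((|Real.log (z + w)| + (i + 1) * Real.log 4) * |ν / 4|) * r ^ i) := by
      have := moser_aux_summable r (|Real.log (z + w)| * |ν / 4|) (Real.log 4 * |ν / 4|)
        hr0 hr1
      exact this.congr (fun i => by ring)
    refine Summable.of_nonneg_of_le (fun i => norm_nonneg _) (fun i => ?_) hnorm
    · rw [Real.norm_eq_abs, hg]
      calc |Real.log (z + w * 4 ^ (i + 1)) * (ν / 4 * r ^ i)|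
          = |Real.log (z + w * 4 ^ (i + 1))| * |ν / 4| * r ^ i := by
            rw [abs_mul, abs_mul, abs_pow, abs_of_nonneg hr0]; ring
        _ ≤ (|Real.log (z + w)| + (i + 1) * Real.log 4) * |ν / 4| * r ^ i := by
            exact mul_le_mul_of_nonneg_right
              (mul_le_mul_of_nonneg_right (hlogbound i) (abs_nonneg _))
              (pow_nonneg hr0 i)
  set S := ∑' i, g i with hS
  refine ⟨Real.exp S, Real.exp_pos S, ?_, ?_⟩
  · -- convergence of partial products
    have hprod : ∀ k : ℕ,
        (∏ j ∈ Finset.Icc 1 k, (z + w * 4 ^ j) ^ ((ν / 4) * (1 - p / 2) ^ (j - 1)))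
          = Real.exp (∑ i ∈ Finset.range k, g i) := by
      intro k
      rw [← Finset.Ico_add_one_right_eq_Icc, Finset.prod_Ico_eq_prod_range, Real.exp_sum]
      simp only [Nat.add_sub_cancel, Nat.add_sub_cancel_left]
      apply Finset.prod_congr rfl
      intro i _
      rw [Real.rpow_def_of_pos (hbase _), hg]
      simp only [hrdef]
      ring_nf
    have := (hsum.hasSum.tendsto_sum_nat).comp (tendsto_id (α := ℕ))
    have h2 := (Real.continuous_exp.tendsto S).comp hsum.hasSum.tendsto_sum_nat
    refine h2.congr (fun k => ?_)
    exact (hprod k).symm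
  · -- the bound
    have hub : S ≤ ν / (2 * p) * Real.log (z + w) + 2 * ν / p ^ 2 * Real.log 2 := by
      have hνpos : (0:ℝ) < ν := by linarith
      have hν4 : (0:ℝ) ≤ ν / 4 := by linarith
      -- termwise bound
      have hterm : ∀ i : ℕ,
          g i ≤ (Real.log (z + w) + (i + 1) * Real.log 4) * (ν / 4 * r ^ i) := by
        intro i
        have hc : 0 ≤ ν / 4 * r ^ i := by positivity
        have hlog : Real.log (z + w * 4 ^ (i + 1))
            ≤ Real.log (z + w) + (i + 1) * Real.log 4 := by
          calc Real.log (z + w * 4 ^ (i + 1)) ≤ Real.log ((z + w) * 4 ^ (i + 1)) :=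
              Real.log_le_log (hbase _) (hble _)
            _ = Real.log (z + w) + (i + 1) * Real.log 4 := by
                rw [Real.log_mul (ne_of_gt hzw) (by positivity), Real.log_pow]
                push_cast; ring
        exact mul_le_mul_of_nonneg_right hlog hc
      have hsumub : Summable (fun i : ℕ =>
          (Real.log (z + w) + (i + 1) * Real.log 4) * (ν / 4 * r ^ i)) := by
        have := moser_aux_summable r (Real.log (z + w) * (ν / 4)) (Real.log 4 * (ν / 4))
          hr0 hr1
        exact this.congr (fun i => by ring)
      have hle := Summable.tsum_le_tsum hterm hsum hsumub
      -- compute the upper tsum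
      have hgeo : ∑' i : ℕ, r ^ i = (1 - r)⁻¹ := tsum_geometric_of_lt_one hr0 hr1
      have hmulgeo : ∑' i : ℕ, (i : ℝ) * r ^ i = r / (1 - r) ^ 2 :=
        tsum_coe_mul_geometric_of_norm_lt_one hrn
      have hsum1 : Summable (fun i : ℕ => r ^ i) := summable_geometric_of_lt_one hr0 hr1
      have hsum2 : Summable (fun i : ℕ => (i : ℝ) * r ^ i) :=
        (summable_norm_pow_mul_geometric_of_norm_lt_one 1 hrn).of_norm.congr
          (by intro i; push_cast; ring)
      have hsplit : (fun i : ℕ => (Real.log (z + w) + (i + 1) * Real.log 4) * (ν / 4 * r ^ i))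
          = fun i : ℕ => (Real.log (z + w) * (ν / 4) + Real.log 4 * (ν / 4)) * r ^ i
            + (Real.log 4 * (ν / 4)) * ((i : ℝ) * r ^ i) := by
        funext i; ring
      have hval : ∑' i : ℕ,
          (Real.log (z + w) + (i + 1) * Real.log 4) * (ν / 4 * r ^ i)
          = (Real.log (z + w) * (ν / 4) + Real.log 4 * (ν / 4)) * (1 - r)⁻¹
            + (Real.log 4 * (ν / 4)) * (r / (1 - r) ^ 2) := by
        rw [hsplit, Summable.tsum_add (hsum1.mul_left _) (hsum2.mul_left _),
          tsum_mul_left, tsum_mul_left, hgeo, hmulgeo]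
      rw [hval] at hle
      have hlog4 : Real.log 4 = 2 * Real.log 2 := by
        rw [show (4:ℝ) = 2 ^ 2 by norm_num, Real.log_pow]; push_cast; ring
      have h1rp : (1 - r) = p / 2 := h1r
      have hpne : p ≠ 0 := ne_of_gt hp0
      calc S ≤ (Real.log (z + w) * (ν / 4) + Real.log 4 * (ν / 4)) * (1 - r)⁻¹
            + (Real.log 4 * (ν / 4)) * (r / (1 - r) ^ 2) := hle
        _ = ν / (2 * p) * Real.log (z + w) + 2 * ν / p ^ 2 * Real.log 2 := by
            rw [h1rp, hlog4, hrdef]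
            field_simp
            ring
    calc Real.exp S
        ≤ Real.exp (ν / (2 * p) * Real.log (z + w) + 2 * ν / p ^ 2 * Real.log 2) :=
          Real.exp_le_exp.mpr hub
      _ = (z + w) ^ (ν / (2 * p)) * (2 : ℝ) ^ (2 * ν / p ^ 2) := by
          rw [Real.exp_add, Real.rpow_def_of_pos hzw, Real.rpow_def_of_pos (by norm_num : (0:ℝ) < 2)]
          ring_nf
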